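/- For a k-simplex x of the Barratt-Eccles simplicial set Γ(A) and a,b ∈ A, the weights satisfy w_{dᵢx}(a,b) ≤ w_x(a,b) for each face map dᵢ and w_{sⱼx}(a,b) = w_x(a,b) for each degeneracy sⱼ. Consequently Γₙ(A) = {x ∈ Γ(A) | w_x(a,b) ≤ n for all a,b} is a simplicial subset of Γ(A). -/

import Mathlib

open Classical

/-- `r` is a strict linear order. -/
def IsSLO {A : Type} (r : A → A → Prop) : Prop :=
  (∀ a, ¬ r a a) ∧ (∀ a b c, r a b → r b c → r a c) ∧ (∀ a b, a ≠ b → r a b ∨ r b a)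

/-- The weight `w_x(a,b)` of a `k`-simplex `x = (L₀ → ⋯ → L_k)` of the Barratt–Eccles
simplicial set `Γ(A)`: `1` plus the number of steps in which the relative order of `a` and
`b` changes. -/
noncomputable def wBE {A : Type} {k : ℕ} (L : Fin (k + 1) → A → A → Prop) (a b : A) : ℕ :=
  1 + (Finset.univ.filter fun i : Fin k =>
        ¬ (L i.castSucc a b ↔ L i.succ a b)).card

lemma val_succAbove' {n : ℕ} (p : Fin (n+1)) (i : Fin n) :
    ((p.succAbove i : Fin (n+1)) : ℕ) = if (i:ℕ) < (p:ℕ) then (i:ℕ) else (i:ℕ)+1 := by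
  rcases lt_or_ge (Fin.castSucc i) p with h | h
  · rw [Fin.succAbove_of_castSucc_lt _ _ h]
    have : (i:ℕ) < (p:ℕ) := h
    simp [this]
  · rw [Fin.succAbove_of_le_castSucc _ _ h]
    have : (p:ℕ) ≤ (i:ℕ) := h
    simp [Nat.not_lt.mpr this]

lemma val_predAbove' {n : ℕ} (p : Fin n) (i : Fin (n+1)) :
    ((p.predAbove i) : ℕ) = if (i:ℕ) ≤ (p:ℕ) then (i:ℕ) else (i:ℕ)-1 := by
  rcases le_or_gt i (Fin.castSucc p) with h | h
  · rw [Fin.predAbove_of_le_castSucc _ _ h]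
    have : (i:ℕ) ≤ (p:ℕ) := h
    simp [this]
  · rw [Fin.predAbove_of_castSucc_lt _ _ h]
    have : (p:ℕ) < (i:ℕ) := h
    simp [Nat.not_le.mpr this]

/-- for a simplex `x` of `Γ(A)` and `a, b ∈ A`, the weights satisfy
`w_{dᵢ x}(a,b) ≤ w_x(a,b)` for each face map `dᵢ` (which deletes the `i`-th linear order)
and `w_{sⱼ x}(a,b) = w_x(a,b)` for each degeneracy `sⱼ` (which repeats the `j`-th linear
order); consequently the sets `Γₙ(A) = {x | w_x(a,b) ≤ n for all a,b}` form a simplicial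
subset of `Γ(A)`. -/
theorem statement12 {A : Type} (a b : A) :
    (∀ (k : ℕ) (L : Fin (k + 2) → A → A → Prop), (∀ i, IsSLO (L i)) →
      ∀ i : Fin (k + 2), wBE (fun j => L (i.succAbove j)) a b ≤ wBE L a b) ∧
    (∀ (k : ℕ) (L : Fin (k + 1) → A → A → Prop), (∀ i, IsSLO (L i)) →
      ∀ j : Fin (k + 1), wBE (fun i => L (j.predAbove i)) a b = wBE L a b) := by
  classical
  constructor
  · -- faces
    intro k L _ i
    unfold wBE
    apply Nat.add_le_add_left
    set C : Fin k → Prop := fun t =>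
      (t:ℕ)+1 < (i:ℕ) ∨ ((t:ℕ)+1 = (i:ℕ) ∧ ¬ (L (i.succAbove t.castSucc) a b ↔ L i a b))
      with hC
    set g : Fin k → Fin (k+1) := fun t => if C t then t.castSucc else t.succ with hg
    apply Finset.card_le_card_of_injOn g
    · intro t ht
      rw [Finset.mem_coe, Finset.mem_filter] at ht ⊢
      refine ⟨Finset.mem_univ _, ?_⟩
      have hnew : ¬ (L (i.succAbove t.castSucc) a b ↔ L (i.succAbove t.succ) a b) := ht.2
      by_cases hc : C t
      · have hgt : g t = t.castSucc := if_pos hc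
        rw [hgt]
        rcases hc with h1 | ⟨h2, h3⟩
        · -- t+1 < i : both endpoints below i
          have e1 : i.succAbove t.castSucc = t.castSucc.castSucc := by
            apply Fin.ext; rw [val_succAbove']
            simp only [Fin.coe_castSucc]; split_ifs <;> omega
          have e2 : i.succAbove t.succ = t.castSucc.succ := by
            apply Fin.ext; rw [val_succAbove']
            simp only [Fin.val_succ, Fin.coe_castSucc]; split_ifs <;> omega
          rw [e1, e2] at hnew
          exact hnew
        · -- t+1 = i, left step changed
          have e3 : i = t.castSucc.succ := by
            apply Fin.ext; simp only [Fin.val_succ, Fin.coe_castSucc]; omega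
          have e1 : i.succAbove t.castSucc = t.castSucc.castSucc := by
            apply Fin.ext; rw [val_succAbove']
            simp only [Fin.coe_castSucc]; split_ifs <;> omega
          rw [e1, e3] at h3
          exact h3
      · have hgt : g t = t.succ := if_neg hc
        rw [hgt]
        rw [hC, not_or] at hc
        by_cases h1 : (i:ℕ) ≤ (t:ℕ)
        · -- t ≥ i : both endpoints above i
          have e1 : i.succAbove t.castSucc = t.succ.castSucc := by
            apply Fin.ext; rw [val_succAbove']
            simp only [Fin.coe_castSucc, Fin.val_succ]; split_ifs <;> omega
          have e2 : i.succAbove t.succ = t.succ.succ := by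
            apply Fin.ext; rw [val_succAbove']
            simp only [Fin.val_succ]; split_ifs <;> omega
          rw [e1, e2] at hnew
          exact hnew
        · -- t+1 = i, left step unchanged
          have hlt : ¬ ((t:ℕ)+1 < (i:ℕ)) := hc.1
          have h2 : (t:ℕ)+1 = (i:ℕ) := by omega
          have hleft : (L (i.succAbove t.castSucc) a b ↔ L i a b) := by
            by_contra hx; exact hc.2 ⟨h2, hx⟩
          have e1 : i = t.succ.castSucc := by
            apply Fin.ext; simp only [Fin.coe_castSucc, Fin.val_succ]; omega
          have e2 : i.succAbove t.succ = t.succ.succ := by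
            apply Fin.ext; rw [val_succAbove']
            simp only [Fin.val_succ]; split_ifs <;> omega
          rw [e2] at hnew
          rw [← e1]
          intro h
          exact hnew (Iff.trans hleft h)
    · intro t1 _ t2 _ h
      have hv : ((g t1 : Fin (k+1)) : ℕ) = ((g t2 : Fin (k+1)) : ℕ) := by rw [h]
      have key : ∀ t : Fin k, (((g t : Fin (k+1)) : ℕ) = (t:ℕ) ∧ (t:ℕ)+1 ≤ (i:ℕ)) ∨
          (((g t : Fin (k+1)) : ℕ) = (t:ℕ)+1 ∧ (i:ℕ) ≤ (t:ℕ)+1) := by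
        intro t
        by_cases hc : C t
        · left
          constructor
          · rw [hg]; simp only [if_pos hc, Fin.coe_castSucc]
          · rcases hc with h1 | ⟨h2, _⟩ <;> omega
        · right
          constructor
          · rw [hg]; simp only [if_neg hc, Fin.val_succ]
          · rw [hC, not_or] at hc
            have := hc.1
            omega
      rcases key t1 with ⟨e1, b1⟩ | ⟨e1, b1⟩ <;>
        rcases key t2 with ⟨e2, b2⟩ | ⟨e2, b2⟩ <;>
        (apply Fin.ext; omega)
  · -- degeneracies
    intro k L _ j
    unfold wBE
    congr 1
    symm
    have key1 : ∀ s : Fin k, j.predAbove (j.succAbove s).castSucc = s.castSucc := by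
      intro s
      apply Fin.ext
      rw [val_predAbove']
      simp only [Fin.coe_castSucc]
      rw [val_succAbove']
      split_ifs <;> omega
    have key2 : ∀ s : Fin k, j.predAbove (j.succAbove s).succ = s.succ := by
      intro s
      apply Fin.ext
      rw [val_predAbove']
      simp only [Fin.val_succ]
      rw [val_succAbove']
      split_ifs <;> omega
    apply Finset.card_bij (fun (s : Fin k) _ => j.succAbove s)
    · intro s hs
      rw [Finset.mem_filter] at hs ⊢
      exact ⟨Finset.mem_univ _, by simp only [key1, key2]; exact hs.2⟩
    · intro s1 _ s2 _ h
      exact Fin.succAbove_right_injective h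
    · intro m hm
      rw [Finset.mem_filter] at hm
      have hm2 : ¬ (L (j.predAbove m.castSucc) a b ↔ L (j.predAbove m.succ) a b) := hm.2
      have hmj : m ≠ j := by
        intro hEq
        subst hEq
        apply hm2
        have e1 : m.predAbove m.castSucc = m := by
          apply Fin.ext; rw [val_predAbove']
          simp only [Fin.coe_castSucc]; split_ifs <;> omega
        have e2 : m.predAbove m.succ = m := by
          apply Fin.ext; rw [val_predAbove']
          simp only [Fin.val_succ]; split_ifs <;> omega
        rw [e1, e2]
      obtain ⟨s, hs⟩ := Fin.exists_succAbove_eq hmj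
      refine ⟨s, ?_, hs⟩
      rw [Finset.mem_filter]
      refine ⟨Finset.mem_univ _, ?_⟩
      subst hs
      rw [key1, key2] at hm2
      exact hm2
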